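/- Let e ≥ 3 and let m_1, …, m_e be positive integers with d = m_1 + … + m_e, and assume 2·m_i ≠ d for every i. Set C = 2 − e + Σ_{i=1}^e d/(d − 2·m_i) (a rational number). Then C > 0 if 2·m_i < d for every i, and C < 0 if 2·m_j > d for some j. (Proposition 1.5, sign of the coefficient C_{−2/d}.) -/

import Mathlib

/-- Proposition 1.5 (sign of the coefficient `C_{-2/d}`): for `e ≥ 3` lines with positive
multiplicities `m₁, …, m_e` summing to `d`, with `2mᵢ ≠ d` for all `i`, the coefficient
`C = 2 - e + Σᵢ d/(d - 2mᵢ)` is positive if `2mᵢ < d` for every `i` (i.e. the origin is a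
good dense edge) and negative if `2mⱼ > d` for some `j`. -/
theorem statement1 (e : ℕ) (he : 3 ≤ e) (m : Fin e → ℕ) (hm : ∀ i, 0 < m i)
    (d : ℕ) (hd : d = ∑ i, m i) (hne : ∀ i, 2 * m i ≠ d)
    (C : ℚ) (hC : C = 2 - (e : ℚ) + ∑ i, (d : ℚ) / ((d : ℚ) - 2 * (m i : ℚ))) :
    ((∀ i, 2 * m i < d) → 0 < C) ∧ ((∃ j, d < 2 * m j) → C < 0) := by
  have hdQ : (d : ℚ) = ∑ i, (m i : ℚ) := by rw [hd]; push_cast; rfl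
  have hneQ : ∀ i, (d : ℚ) - 2 * (m i : ℚ) ≠ 0 := by
    intro i h
    apply hne i
    have : (2 * m i : ℚ) = (d : ℚ) := by linarith
    exact_mod_cast this
  -- rewrite C = 2 + ∑ 2 m_i / (d - 2 m_i)
  have hsplit : ∀ i : Fin e,
      (d : ℚ) / ((d : ℚ) - 2 * (m i : ℚ)) = 1 + 2 * (m i : ℚ) / ((d : ℚ) - 2 * (m i : ℚ)) := by
    intro i
    field_simp [hneQ i]
    ring
  have hC' : C = 2 + ∑ i, 2 * (m i : ℚ) / ((d : ℚ) - 2 * (m i : ℚ)) := by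
    rw [hC, Finset.sum_congr rfl (fun i _ => hsplit i), Finset.sum_add_distrib]
    simp [Finset.card_univ]
    ring
  constructor
  · intro hlt
    have hpos : 0 < ∑ i, 2 * (m i : ℚ) / ((d : ℚ) - 2 * (m i : ℚ)) := by
      apply Finset.sum_pos
      · intro i _
        apply div_pos
        · have := hm i; positivity
        · have := hlt i
          have : (2 * m i : ℚ) < (d : ℚ) := by exact_mod_cast this
          push_cast at this ⊢
          linarith
      · haveI : Nonempty (Fin e) := ⟨⟨0, by omega⟩⟩
        exact Finset.univ_nonempty
    linarith [hC']
  · rintro ⟨j, hj⟩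
    -- for every i ≠ j, m i + m j < d
    have hij : ∀ i, i ≠ j → m i + m j < d := by
      intro i hij
      obtain ⟨k, hk⟩ : ∃ k : Fin e, k ∉ ({i, j} : Finset (Fin e)) := by
        by_contra h
        push_neg at h
        have hsub : (Finset.univ : Finset (Fin e)) ⊆ {i, j} := fun x _ => h x
        have := Finset.card_le_card hsub
        have h2 : ({i, j} : Finset (Fin e)).card ≤ 2 := by
          apply le_trans (Finset.card_insert_le _ _)
          simp
        rw [Finset.card_univ, Fintype.card_fin] at this
        omega
      simp only [Finset.mem_insert, Finset.mem_singleton, not_or] at hk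
      have hsub : ({i, j, k} : Finset (Fin e)) ⊆ Finset.univ := Finset.subset_univ _
      have hsum : ∑ x ∈ ({i, j, k} : Finset (Fin e)), m x ≤ d := by
        rw [hd]
        exact Finset.sum_le_sum_of_subset hsub
      rw [Finset.sum_insert (by simp [hij, Ne.symm hk.1]),
        Finset.sum_insert (by simp [Ne.symm hk.2]), Finset.sum_singleton] at hsum
      have := hm k
      omega
    -- the key estimate
    set t : ℚ := 2 * (m j : ℚ) - (d : ℚ) with ht_def
    have ht : 0 < t := by
      have : (d : ℚ) < 2 * (m j : ℚ) := by exact_mod_cast hj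
      linarith
    have hxj : 2 * (m j : ℚ) / ((d : ℚ) - 2 * (m j : ℚ)) = -(2 * (m j : ℚ) / t) := by
      rw [ht_def]
      rw [div_eq_iff (by linarith : (d : ℚ) - 2 * (m j : ℚ) ≠ 0)]
      field_simp [show (2 * (m j : ℚ) - (d : ℚ)) ≠ 0 by linarith]
      ring
    have hjmem : j ∈ (Finset.univ : Finset (Fin e)) := Finset.mem_univ j
    have hsumsplit : ∑ i, 2 * (m i : ℚ) / ((d : ℚ) - 2 * (m i : ℚ)) =
        2 * (m j : ℚ) / ((d : ℚ) - 2 * (m j : ℚ)) +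
        ∑ i ∈ Finset.univ.erase j, 2 * (m i : ℚ) / ((d : ℚ) - 2 * (m i : ℚ)) :=
      (Finset.add_sum_erase _ _ hjmem).symm
    have herase_ne : (Finset.univ.erase j : Finset (Fin e)).Nonempty := by
      rw [← Finset.card_pos, Finset.card_erase_of_mem hjmem, Finset.card_univ,
        Fintype.card_fin]
      omega
    have hbound : ∑ i ∈ Finset.univ.erase j, 2 * (m i : ℚ) / ((d : ℚ) - 2 * (m i : ℚ)) <
        ∑ i ∈ Finset.univ.erase j, 2 * (m i : ℚ) / t := by
      apply Finset.sum_lt_sum_of_nonempty herase_ne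
      intro i hi
      have hine : i ≠ j := Finset.ne_of_mem_erase hi
      have hmij := hij i hine
      have hden : t < (d : ℚ) - 2 * (m i : ℚ) := by
        have : (m i : ℚ) + (m j : ℚ) < (d : ℚ) := by exact_mod_cast hmij
        rw [ht_def]; linarith
      apply div_lt_div_of_pos_left
      · have := hm i; positivity
      · exact ht
      · exact hden
    have hsum_erase : ∑ i ∈ Finset.univ.erase j, (m i : ℚ) = (d : ℚ) - (m j : ℚ) := by
      have := Finset.add_sum_erase Finset.univ (fun i => (m i : ℚ)) hjmem
      rw [← hdQ] at this
      linarith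
    have hsum_t : ∑ i ∈ Finset.univ.erase j, 2 * (m i : ℚ) / t =
        2 * ((d : ℚ) - (m j : ℚ)) / t := by
      rw [← Finset.sum_div, ← Finset.mul_sum, hsum_erase]
    have hfinal : ∑ i, 2 * (m i : ℚ) / ((d : ℚ) - 2 * (m i : ℚ)) < -2 := by
      rw [hsumsplit, hxj]
      have : -(2 * (m j : ℚ) / t) + 2 * ((d : ℚ) - (m j : ℚ)) / t = -2 := by
        field_simp
        rw [ht_def]; ring
      calc -(2 * (m j : ℚ) / t) + ∑ i ∈ Finset.univ.erase j,
            2 * (m i : ℚ) / ((d : ℚ) - 2 * (m i : ℚ))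
          < -(2 * (m j : ℚ) / t) + 2 * ((d : ℚ) - (m j : ℚ)) / t := by
            rw [← hsum_t]; linarith [hbound]
        _ = -2 := this
    linarith [hC']
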